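/- Sufficient statistics for the marginal costs of public funds (Proposition 4). Assume ρ_t ≠ 0, ρ_v ≠ 0, 1 + (v − ε·τ)·ρ_t ≠ 0, 1 + (v − ε·τ)·ρ_v ≠ 0, and that ∂R/∂t and ∂R/∂v are nonzero at (t₀, v₀). Then the marginal costs of public funds MC_t := −(∂W/∂t)/(∂R/∂t) and MC_v := −(∂W/∂v)/(∂R/∂v) satisfy MC_t = ε·[(1−v+τ)·ρ_t − (1−v)·ρ_v] / [1 + (v − ε·τ)·ρ_t] and MC_v = ε·(ρ_v/ρ_t)·[(1−v+τ)·ρ_t − (1−v)·ρ_v] / [1 + (v − ε·τ)·ρ_v], where ε and τ are evaluated at the equilibrium point q = q*(t₀, v₀), p = P(t₀, v₀), (t, v) = (t₀, v₀). In particular ρ_t, ρ_v, ε, τ, v suffice to compute MC_t and MC_v without knowledge of the conduct index θ. -/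

import Mathlib

/-- **Proposition 4 (Sufficient statistics for the marginal costs of public funds).** -/
theorem sufficient_statistics_for_mc_public_funds
    -- inverse industry demand, twice differentiable, positive and decreasing on q > 0
    (p p' p'' : ℝ → ℝ)
    (hp : ∀ q : ℝ, HasDerivAt p (p' q) q)
    (hp' : ∀ q : ℝ, HasDerivAt p' (p'' q) q)
    (hppos : ∀ q : ℝ, 0 < q → 0 < p q)
    (hpneg : ∀ q : ℝ, 0 < q → p' q < 0)
    -- cost function, twice differentiable, marginal cost mc = c'
    (c mc mc' : ℝ → ℝ)
    (hc : ∀ q : ℝ, HasDerivAt c (mc q) q)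
    (hmc : ∀ q : ℝ, HasDerivAt mc (mc' q) q)
    -- conduct index
    (θ : ℝ → ℝ) (hθ : Differentiable ℝ θ)
    -- initial taxes
    (t₀ v₀ : ℝ) (hv₀ : v₀ < 1)
    -- symmetric equilibrium on an open neighborhood of (t₀, v₀)
    (qs : ℝ × ℝ → ℝ) (U : Set (ℝ × ℝ)) (hU : IsOpen U) (hU₀ : (t₀, v₀) ∈ U)
    (hqs : ContDiffOn ℝ 1 qs U)
    (hqpos : ∀ tv ∈ U, 0 < qs tv)
    (hFOC : ∀ tv ∈ U,
      p (qs tv) - (tv.1 + mc (qs tv)) / (1 - tv.2)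
        = θ (qs tv) * (-(qs tv) * p' (qs tv) / p (qs tv)) * p (qs tv))
    -- equilibrium values of quantity, price, elasticities, tax share, conduct
    (q0 p0 η0 ε0 τ0 θ0 : ℝ)
    (hq0 : q0 = qs (t₀, v₀)) (hp0 : p0 = p q0)
    (hη0 : η0 = -q0 * p' q0 / p q0) (hε0 : ε0 = 1 / η0)
    (hτ0 : τ0 = v₀ + t₀ / p0) (hθ0 : θ0 = θ q0)
    -- pass-through rate and semi-elasticity
    (ρt ρv : ℝ)
    (hρt : ρt = deriv (fun t => p (qs (t, v₀))) t₀)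
    (hρv : ρv = (1 / p0) * deriv (fun v => p (qs (t₀, v))) v₀)
    (hρt0 : ρt ≠ 0) (hρv0 : ρv ≠ 0)
    (hden_t : 1 + (v₀ - ε0 * τ0) * ρt ≠ 0)
    (hden_v : 1 + (v₀ - ε0 * τ0) * ρv ≠ 0)
    -- per-firm surplus measures
    (CS PS R W : ℝ × ℝ → ℝ)
    (hCS : ∀ tv : ℝ × ℝ, CS tv = (∫ s in (0:ℝ)..(qs tv), p s) - p (qs tv) * qs tv)
    (hPS : ∀ tv : ℝ × ℝ,
      PS tv = (1 - tv.2) * p (qs tv) * qs tv - tv.1 * qs tv - c (qs tv))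
    (hR : ∀ tv : ℝ × ℝ, R tv = tv.1 * qs tv + tv.2 * p (qs tv) * qs tv)
    (hW : ∀ tv : ℝ × ℝ, W tv = CS tv + PS tv + R tv)
    -- nonzero marginal revenue of taxation
    (hRt : deriv (fun t => R (t, v₀)) t₀ ≠ 0)
    (hRv : deriv (fun v => R (t₀, v)) v₀ ≠ 0) :
    -- MC_t and MC_v are expressed by the sufficient statistics ρ_t, ρ_v, ε, τ, v alone
    -(deriv (fun t => W (t, v₀)) t₀) / deriv (fun t => R (t, v₀)) t₀
        = ε0 * ((1 - v₀ + τ0) * ρt - (1 - v₀) * ρv) / (1 + (v₀ - ε0 * τ0) * ρt)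
    ∧ -(deriv (fun v => W (t₀, v)) v₀) / deriv (fun v => R (t₀, v)) v₀
        = ε0 * (ρv / ρt) * ((1 - v₀ + τ0) * ρt - (1 - v₀) * ρv)
            / (1 + (v₀ - ε0 * τ0) * ρv) := by
  subst hq0 hp0 hη0 hε0 hτ0 hθ0
  -- abbreviations
  set q : ℝ := qs (t₀, v₀) with hqdef
  have hqgt : 0 < q := hqpos _ hU₀
  have hPpos : 0 < p q := hppos _ hqgt
  have hPne : p q ≠ 0 := ne_of_gt hPpos
  have hqne : q ≠ 0 := ne_of_gt hqgt
  have hpcne : p' q ≠ 0 := ne_of_lt (hpneg _ hqgt)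
  have hv1 : (1 : ℝ) - v₀ ≠ 0 := by linarith
  -- differentiability of qs at the point
  have hqsd : DifferentiableAt ℝ qs (t₀, v₀) :=
    (hqs.contDiffAt (hU.mem_nhds hU₀)).differentiableAt one_ne_zero
  -- t-slice and v-slice of qs
  have hslt : DifferentiableAt ℝ (fun t => qs (t, v₀)) t₀ :=
    hqsd.comp t₀ (differentiableAt_id.prodMk (differentiableAt_const _))
  have hslv : DifferentiableAt ℝ (fun v => qs (t₀, v)) v₀ :=
    hqsd.comp v₀ ((differentiableAt_const _).prodMk differentiableAt_id)
  set qt : ℝ := deriv (fun t => qs (t, v₀)) t₀ with hqtdef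
  set qv : ℝ := deriv (fun v => qs (t₀, v)) v₀ with hqvdef
  have hqt : HasDerivAt (fun t => qs (t, v₀)) qt t₀ := hslt.hasDerivAt
  have hqv : HasDerivAt (fun v => qs (t₀, v)) qv v₀ := hslv.hasDerivAt
  -- chain rules for the t-slice
  have hpt : HasDerivAt (fun t => p (qs (t, v₀))) (p' q * qt) t₀ := (hp q).comp t₀ hqt
  have hp't : HasDerivAt (fun t => p' (qs (t, v₀))) (p'' q * qt) t₀ := (hp' q).comp t₀ hqt
  have hmct : HasDerivAt (fun t => mc (qs (t, v₀))) (mc' q * qt) t₀ := (hmc q).comp t₀ hqt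
  have hct : HasDerivAt (fun t => c (qs (t, v₀))) (mc q * qt) t₀ := (hc q).comp t₀ hqt
  have hθt : HasDerivAt (fun t => θ (qs (t, v₀))) (deriv θ q * qt) t₀ :=
    ((hθ q).hasDerivAt).comp t₀ hqt
  -- chain rules for the v-slice
  have hpv : HasDerivAt (fun v => p (qs (t₀, v))) (p' q * qv) v₀ := (hp q).comp v₀ hqv
  have hp'v : HasDerivAt (fun v => p' (qs (t₀, v))) (p'' q * qv) v₀ := (hp' q).comp v₀ hqv
  have hmcv : HasDerivAt (fun v => mc (qs (t₀, v))) (mc' q * qv) v₀ := (hmc q).comp v₀ hqv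
  have hcv : HasDerivAt (fun v => c (qs (t₀, v))) (mc q * qv) v₀ := (hc q).comp v₀ hqv
  have hθv : HasDerivAt (fun v => θ (qs (t₀, v))) (deriv θ q * qv) v₀ :=
    ((hθ q).hasDerivAt).comp v₀ hqv
  -- pass-through in terms of qt, qv
  have hρt2 : ρt = p' q * qt := by rw [hρt, hpt.deriv]
  have hρv2 : ρv = (1 / p q) * (p' q * qv) := by rw [hρv, hpv.deriv]
  have hqtne : qt ≠ 0 := by
    intro h; apply hρt0; rw [hρt2, h, mul_zero]
  -- cleaned-up FOC on U
  have hFOC' : ∀ tv ∈ U, tv.2 < 1 →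
      (1 - tv.2) * (p (qs tv) + θ (qs tv) * qs tv * p' (qs tv)) - tv.1 - mc (qs tv) = 0 := by
    intro tv hmem hlt
    have h0 := hFOC tv hmem
    have hpq : p (qs tv) ≠ 0 := ne_of_gt (hppos _ (hqpos _ hmem))
    have hv : (1 : ℝ) - tv.2 ≠ 0 := by linarith
    field_simp at h0
    have h1 : ((1 - tv.2) * (p (qs tv) + θ (qs tv) * qs tv * p' (qs tv)) - tv.1 - mc (qs tv))
        * p (qs tv) = 0 := by linear_combination p (qs tv) * h0
    exact (mul_eq_zero.mp h1).resolve_right hpq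
  -- FOC holds eventually along each slice
  have hev_t : ∀ᶠ t in nhds t₀,
      (1 - v₀) * (p (qs (t, v₀)) + θ (qs (t, v₀)) * qs (t, v₀) * p' (qs (t, v₀)))
        - t - mc (qs (t, v₀)) = 0 := by
    have hc : ContinuousAt (fun t : ℝ => (t, v₀)) t₀ :=
      (continuous_id.prodMk continuous_const).continuousAt
    have hmem : (fun t : ℝ => (t, v₀)) ⁻¹' U ∈ nhds t₀ :=
      hc.preimage_mem_nhds (hU.mem_nhds hU₀)
    filter_upwards [hmem] with t ht
    exact hFOC' _ ht hv₀
  have hev_v : ∀ᶠ v in nhds v₀,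
      (1 - v) * (p (qs (t₀, v)) + θ (qs (t₀, v)) * qs (t₀, v) * p' (qs (t₀, v)))
        - t₀ - mc (qs (t₀, v)) = 0 := by
    have hc : ContinuousAt (fun v : ℝ => (t₀, v)) v₀ :=
      (continuous_const.prodMk continuous_id).continuousAt
    have hmem : (fun v : ℝ => (t₀, v)) ⁻¹' U ∈ nhds v₀ :=
      hc.preimage_mem_nhds (hU.mem_nhds hU₀)
    have hmem2 : Set.Iio (1 : ℝ) ∈ nhds v₀ := isOpen_Iio.mem_nhds hv₀
    filter_upwards [hmem, hmem2] with v h1 h2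
    exact hFOC' _ h1 h2
  -- FOC at the point
  have hE1 : (1 - v₀) * (p q + θ q * q * p' q) - t₀ - mc q = 0 := hFOC' _ hU₀ hv₀
  -- derivative of the FOC along the t-slice
  have hGt : HasDerivAt
      (fun t => (1 - v₀) * (p (qs (t, v₀)) + θ (qs (t, v₀)) * qs (t, v₀) * p' (qs (t, v₀)))
        - t - mc (qs (t, v₀)))
      ((1 - v₀) * (p' q * qt + ((deriv θ q * qt * q + θ q * qt) * p' q
          + θ q * q * (p'' q * qt))) - 1 - mc' q * qt) t₀ := by
    exact (((hpt.add (((hθt.mul hqt).mul hp't))).const_mul (1 - v₀)).sub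
      (hasDerivAt_id t₀)).sub hmct
  have hDt0 : (1 - v₀) * (p' q * qt + ((deriv θ q * qt * q + θ q * qt) * p' q
      + θ q * q * (p'' q * qt))) - 1 - mc' q * qt = 0 := by
    have h1 := hGt.deriv
    have h2 := Filter.EventuallyEq.deriv_eq (f₁ := fun t =>
      (1 - v₀) * (p (qs (t, v₀)) + θ (qs (t, v₀)) * qs (t, v₀) * p' (qs (t, v₀)))
        - t - mc (qs (t, v₀))) (f := fun _ : ℝ => (0:ℝ)) (x := t₀) hev_t
    rw [h2, deriv_const] at h1
    linarith [h1]
  -- derivative of the FOC along the v-slice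
  have hGv : HasDerivAt
      (fun v => (1 - v) * (p (qs (t₀, v)) + θ (qs (t₀, v)) * qs (t₀, v) * p' (qs (t₀, v)))
        - t₀ - mc (qs (t₀, v)))
      ((-1) * (p q + θ q * q * p' q) + (1 - v₀) * (p' q * qv
          + ((deriv θ q * qv * q + θ q * qv) * p' q + θ q * q * (p'' q * qv)))
        - 0 - mc' q * qv) v₀ := by
    have hlin : HasDerivAt (fun v : ℝ => 1 - v) (-1 : ℝ) v₀ := by
      have h := (hasDerivAt_id' v₀).const_sub (1:ℝ); exact h
    exact ((hlin.mul (hpv.add ((hθv.mul hqv).mul hp'v))).sub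
      (hasDerivAt_const v₀ t₀)).sub hmcv
  have hDv0 : (-1) * (p q + θ q * q * p' q) + (1 - v₀) * (p' q * qv
      + ((deriv θ q * qv * q + θ q * qv) * p' q + θ q * q * (p'' q * qv)))
      - 0 - mc' q * qv = 0 := by
    have h1 := hGv.deriv
    have h2 := Filter.EventuallyEq.deriv_eq (f₁ := fun v =>
      (1 - v) * (p (qs (t₀, v)) + θ (qs (t₀, v)) * qs (t₀, v) * p' (qs (t₀, v)))
        - t₀ - mc (qs (t₀, v))) (f := fun _ : ℝ => (0:ℝ)) (x := v₀) hev_v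
    rw [h2, deriv_const] at h1
    linarith [h1]
  -- the key implicit-differentiation identity relating qv and qt
  have hqveq : qv = (p q + θ q * q * p' q) * qt := by
    linear_combination qt * hDv0 - qv * hDt0
  -- mc at the point from the FOC
  have hmc0 : mc q = (1 - v₀) * (p q + θ q * q * p' q) - t₀ := by linarith [hE1]
  -- welfare simplifies to  ∫₀^{q*} p − c(q*)
  have hWfun : ∀ tv : ℝ × ℝ, W tv = (∫ s in (0:ℝ)..(qs tv), p s) - c (qs tv) := by
    intro tv; rw [hW, hCS, hPS, hR]; ring
  -- derivative of the integral term
  have hpdiff : Differentiable ℝ p := fun x => (hp x).differentiableAt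
  have hpcont : Continuous p := hpdiff.continuous
  have hF : HasDerivAt (fun u : ℝ => ∫ s in (0:ℝ)..u, p s) (p q) q :=
    intervalIntegral.integral_hasDerivAt_right (hpcont.intervalIntegrable _ _)
      hpcont.aestronglyMeasurable.stronglyMeasurableAtFilter hpcont.continuousAt
  -- derivative of W along each slice
  have hWt : deriv (fun t => W (t, v₀)) t₀ = (p q - mc q) * qt := by
    have heq : (fun t => W (t, v₀))
        = fun t => (∫ s in (0:ℝ)..(qs (t, v₀)), p s) - c (qs (t, v₀)) :=
      funext fun t => hWfun (t, v₀)
    rw [heq]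
    have : HasDerivAt (fun t => (∫ s in (0:ℝ)..(qs (t, v₀)), p s) - c (qs (t, v₀)))
        (p q * qt - mc q * qt) t₀ := by have h := (hF.comp t₀ hqt).sub hct; exact h
    rw [this.deriv]; ring
  have hWv : deriv (fun v => W (t₀, v)) v₀ = (p q - mc q) * qv := by
    have heq : (fun v => W (t₀, v))
        = fun v => (∫ s in (0:ℝ)..(qs (t₀, v)), p s) - c (qs (t₀, v)) :=
      funext fun v => hWfun (t₀, v)
    rw [heq]
    have : HasDerivAt (fun v => (∫ s in (0:ℝ)..(qs (t₀, v)), p s) - c (qs (t₀, v)))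
        (p q * qv - mc q * qv) v₀ := by have h := (hF.comp v₀ hqv).sub hcv; exact h
    rw [this.deriv]; ring
  -- derivative of R along each slice
  have hRtval : deriv (fun t => R (t, v₀)) t₀
      = q + t₀ * qt + v₀ * ((p' q * qt) * q + p q * qt) := by
    have heq : (fun t => R (t, v₀)) = fun t => t * qs (t, v₀) + v₀ * p (qs (t, v₀)) * qs (t, v₀) :=
      funext fun t => hR (t, v₀)
    rw [heq]
    have : HasDerivAt (fun t => t * qs (t, v₀) + v₀ * p (qs (t, v₀)) * qs (t, v₀))
        ((1 * q + t₀ * qt) + ((0 * p q + v₀ * (p' q * qt)) * q + v₀ * p q * qt)) t₀ :=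
      ((hasDerivAt_id t₀).mul hqt).add (((hasDerivAt_const t₀ v₀).mul hpt).mul hqt)
    rw [this.deriv]; ring
  have hRvval : deriv (fun v => R (t₀, v)) v₀
      = p q * q + t₀ * qv + v₀ * ((p' q * qv) * q + p q * qv) := by
    have heq : (fun v => R (t₀, v)) = fun v => t₀ * qs (t₀, v) + v * p (qs (t₀, v)) * qs (t₀, v) :=
      funext fun v => hR (t₀, v)
    rw [heq]
    have : HasDerivAt (fun v => t₀ * qs (t₀, v) + v * p (qs (t₀, v)) * qs (t₀, v))
        ((0 * q + t₀ * qv) + ((1 * p q + v₀ * (p' q * qv)) * q + v₀ * p q * qv)) v₀ :=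
      (((hasDerivAt_const v₀ t₀)).mul hqv).add (((hasDerivAt_id v₀).mul hpv).mul hqv)
    rw [this.deriv]; ring
  -- denominators rewritten
  have hεne : -q * p' q / p q ≠ 0 := by
    apply div_ne_zero _ hPne
    exact mul_ne_zero (neg_ne_zero.mpr hqne) hpcne
  have hRt_eq : deriv (fun t => R (t, v₀)) t₀
      = q * (1 + (v₀ - 1 / (-q * p' q / p q) * (v₀ + t₀ / p q)) * ρt) := by
    rw [hRtval, hρt2]; field_simp; ring
  have hRv_eq : deriv (fun v => R (t₀, v)) v₀
      = (p q * q) * (1 + (v₀ - 1 / (-q * p' q / p q) * (v₀ + t₀ / p q)) * ρv) := by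
    rw [hRvval, hρv2]; field_simp; ring
  constructor
  · rw [hWt, hRt_eq]
    have hkey : -((p q - mc q) * qt)
        = q * (1 / (-q * p' q / p q) * ((1 - v₀ + (v₀ + t₀ / p q)) * ρt - (1 - v₀) * ρv)) := by
      rw [hρt2, hρv2, hmc0, hqveq]; field_simp; ring
    rw [hkey, mul_div_mul_left _ _ hqne]
  · rw [hWv, hRv_eq]
    have hPqne : p q * q ≠ 0 := mul_ne_zero hPne hqne
    have hkey : -((p q - mc q) * qv)
        = (p q * q) * (1 / (-q * p' q / p q) * (ρv / ρt)
            * ((1 - v₀ + (v₀ + t₀ / p q)) * ρt - (1 - v₀) * ρv)) := by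
      rw [hρt2, hρv2, hmc0, hqveq]; field_simp; ring
    rw [hkey, mul_div_mul_left _ _ hPqne]
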